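/- Let D be a chord diagram and let i, i+1, j, j+1 be four distinct points occurring in this cyclic order such that α = {i, j} and β = {i+1, j+1} are chords of D (a weak RII pair, the Gauss-diagram form of the weak second Reidemeister move). Then α and β cross, every chord e of D other than α and β crosses α if and only if e crosses β, and X(D) = X(D') + 2k + 1, where D' is obtained from D by deleting α and β and k is the number of chords other than β crossing α. If moreover D is evenly interlaced, then k is odd and hence X(D) ≡ X(D') + 3 (mod 4). (This is the paper's claim that one weak RII move changes ⊗ by 4m − 1 for some positive integer m.) -/

import Mathlib

/-- A chord diagram on `2 * n` points: a fixed-point-free involution of `ZMod (2 * n)`.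
Its two-element orbits are called chords; the points lie on a circle in their
natural cyclic order. -/
structure ChordDiagram (n : ℕ) where
  inv : ZMod (2 * n) → ZMod (2 * n)
  involutive : Function.Involutive inv
  fixedPointFree : ∀ x, inv x ≠ x

/-- A chord: an unordered pair of points of the circle `ZMod m`. -/
abbrev Chord (m : ℕ) := Sym2 (ZMod m)

/-- `x` lies in the open cyclic arc running counterclockwise from `a` to `b`. -/
def InArc {m : ℕ} (a b x : ZMod m) : Prop :=
  0 < (x - a).val ∧ (x - a).val < (b - a).val

/-- Two chords cross: exactly one endpoint of the second lies in the open cyclic arc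
bounded by the first. -/
def Chord.Crosses {m : ℕ} (e f : Chord m) : Prop :=
  ∃ a b c d : ZMod m, e = s(a, b) ∧ f = s(c, d) ∧ Xor' (InArc a b c) (InArc a b d)

/-- The set of chords of a chord diagram. -/
def ChordDiagram.chords {n : ℕ} (D : ChordDiagram n) : Set (Chord (2 * n)) :=
  {e | ∃ x, e = s(x, D.inv x)}

/-- `P` is an (unordered) pair of crossing chords of `D`. -/
def ChordDiagram.IsCrossingPair {n : ℕ} (D : ChordDiagram n)
    (P : Finset (Chord (2 * n))) : Prop :=
  P.card = 2 ∧ (∀ e ∈ P, e ∈ D.chords) ∧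
    ∀ e ∈ P, ∀ f ∈ P, e ≠ f → Chord.Crosses e f

/-- `P` is an (unordered) triple of pairwise crossing chords of `D`. -/
def ChordDiagram.IsTripleChord {n : ℕ} (D : ChordDiagram n)
    (P : Finset (Chord (2 * n))) : Prop :=
  P.card = 3 ∧ (∀ e ∈ P, e ∈ D.chords) ∧
    ∀ e ∈ P, ∀ f ∈ P, e ≠ f → Chord.Crosses e f

/-- `P` is an H-triple of `D`: a triple `{a, b, c}` of chords of `D` such that `c`
crosses both `a` and `b` while `a` and `b` do not cross. -/
def ChordDiagram.IsHTriple {n : ℕ} (D : ChordDiagram n)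
    (P : Finset (Chord (2 * n))) : Prop :=
  P.card = 3 ∧ (∀ e ∈ P, e ∈ D.chords) ∧
    ∃ c ∈ P, (∀ e ∈ P, e ≠ c → Chord.Crosses c e) ∧
      ∀ a ∈ P, ∀ b ∈ P, a ≠ c → b ≠ c → a ≠ b → ¬ Chord.Crosses a b

/-- `X D`: the number of unordered pairs of chords of `D` that cross. -/
noncomputable def ChordDiagram.X {n : ℕ} (D : ChordDiagram n) : ℕ :=
  Set.ncard {P | D.IsCrossingPair P}

/-- `T D`: the number of unordered triples of chords of `D` that pairwise cross. -/
noncomputable def ChordDiagram.T {n : ℕ} (D : ChordDiagram n) : ℕ :=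
  Set.ncard {P | D.IsTripleChord P}

/-- `H D`: the number of H-triples of `D`. -/
noncomputable def ChordDiagram.H {n : ℕ} (D : ChordDiagram n) : ℕ :=
  Set.ncard {P | D.IsHTriple P}

/-- `D'` is obtained from `D` by deleting the set `S` of chords: deletion removes the
chords of `S` together with their endpoints and reindexes the remaining points
preserving their cyclic order; in particular it induces a bijection between the
remaining chords of `D` and the chords of `D'` preserving all crossing relations. -/
def ChordDiagram.DeletionOf {n n' : ℕ} (D : ChordDiagram n) (S : Set (Chord (2 * n)))
    (D' : ChordDiagram n') : Prop :=
  ∃ φ : {e : Chord (2 * n) // e ∈ D.chords ∧ e ∉ S} ≃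
      {e : Chord (2 * n') // e ∈ D'.chords},
    ∀ e f, Chord.Crosses e.1 f.1 ↔ Chord.Crosses (φ e).1 (φ f).1

/-- Four points occurring in this (strict counterclockwise) cyclic order;
in particular they are pairwise distinct. -/
def CyclicOrd4 {m : ℕ} (a b c d : ZMod m) : Prop :=
  0 < (b - a).val ∧ (b - a).val < (c - a).val ∧ (c - a).val < (d - a).val

/-- Six points occurring in this (strict counterclockwise) cyclic order;
in particular they are pairwise distinct. -/
def CyclicOrd6 {m : ℕ} (a b c d e f : ZMod m) : Prop :=
  0 < (b - a).val ∧ (b - a).val < (c - a).val ∧ (c - a).val < (d - a).val ∧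
    (d - a).val < (e - a).val ∧ (e - a).val < (f - a).val

/-- `D` is evenly interlaced: every chord of `D` crosses an even number of chords
of `D` (true for the Gauss diagram of every knot projection). -/
def ChordDiagram.EvenlyInterlaced {n : ℕ} (D : ChordDiagram n) : Prop :=
  ∀ e ∈ D.chords, Even (Set.ncard {f | f ∈ D.chords ∧ Chord.Crosses e f})

/-- Exactly two of the three propositions hold. -/
def ExactlyTwo (A B C : Prop) : Prop :=
  (A ∧ B ∧ ¬ C) ∨ (A ∧ ¬ B ∧ C) ∨ (¬ A ∧ B ∧ C)

/-- A strong RIII move: the three pairwise crossing chords `{p, q+1}`, `{q, r+1}`,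
`{r, p+1}` (where `p, p+1, q, q+1, r, r+1` occur in this cyclic order) are replaced by
the three chords `{p+1, q}`, `{q+1, r}`, `{r+1, p}`, all other chords being unchanged. -/
def ChordDiagram.StrongRIII {n : ℕ} (D D' : ChordDiagram n) : Prop :=
  ∃ p q r : ZMod (2 * n), CyclicOrd6 p (p + 1) q (q + 1) r (r + 1) ∧
    s(p, q + 1) ∈ D.chords ∧ s(q, r + 1) ∈ D.chords ∧ s(r, p + 1) ∈ D.chords ∧
    D'.chords = (D.chords \ {s(p, q + 1), s(q, r + 1), s(r, p + 1)}) ∪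
      {s(p + 1, q), s(q + 1, r), s(r + 1, p)}

set_option linter.unusedSectionVars false
section Aux

variable {m : ℕ} [NeZero m]

lemma sub_val_base (a b x : ZMod m) :
    (x - b).val = if (b - a).val ≤ (x - a).val then (x - a).val - (b - a).val
      else m + (x - a).val - (b - a).val := by
  have hx : x - b = (x - a) - (b - a) := by ring
  split_ifs with h
  · rw [hx, ZMod.val_sub h]
  · push_neg at h
    have hne : (b - a) - (x - a) ≠ 0 := by
      intro h0
      rw [sub_eq_zero] at h0
      rw [h0] at h
      omega
    haveI : NeZero ((b - a) - (x - a)) := ⟨hne⟩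
    have h1 : x - b = -((b - a) - (x - a)) := by ring
    rw [h1, ZMod.val_neg_of_ne_zero, ZMod.val_sub (le_of_lt h)]
    have h2 := ZMod.val_lt (b - a)
    omega

lemma base_inj {a x y : ZMod m} (h : (x - a).val = (y - a).val) : x = y := by
  have h2 : x - a = y - a := ZMod.val_injective m h
  exact sub_left_inj.mp h2

lemma val_base_ne {a x y : ZMod m} (h : x ≠ y) : (x - a).val ≠ (y - a).val :=
  fun h2 => h (base_inj h2)

lemma val_base_pos {a x : ZMod m} (h : x ≠ a) : 0 < (x - a).val := by
  have : x - a ≠ 0 := sub_ne_zero_of_ne h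
  have := (ZMod.val_eq_zero (x - a)).not.mpr this
  omega

lemma cyclicOrd4_rotate {a b c d : ZMod m} (h : CyclicOrd4 a b c d) :
    CyclicOrd4 b c d a := by
  obtain ⟨h1, h2, h3⟩ := h
  have hm := ZMod.val_lt (d - a)
  have e1 := sub_val_base a b c
  have e2 := sub_val_base a b d
  have e3 := sub_val_base a b a
  simp only [sub_self, ZMod.val_zero] at e3
  unfold CyclicOrd4
  rw [e1, e2, e3]
  split_ifs <;> omega

lemma xor_iff_cyc {a b c d : ZMod m} (hab : a ≠ b) (hcd : c ≠ d)
    (hca : c ≠ a) (hcb : c ≠ b) (hda : d ≠ a) (hdb : d ≠ b) :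
    Xor' (InArc a b c) (InArc a b d) ↔ CyclicOrd4 a c b d ∨ CyclicOrd4 a d b c := by
  have n1 := val_base_ne (a := a) hcb
  have n2 := val_base_ne (a := a) hdb
  have n3 := val_base_ne (a := a) hcd
  have p1 := val_base_pos (a := a) hca
  have p2 := val_base_pos (a := a) hda
  have p3 := val_base_pos (a := a) (Ne.symm hab)
  unfold Xor' Xor InArc CyclicOrd4
  omega

lemma inArc_swap {a b x : ZMod m} (hab : a ≠ b) (hxa : x ≠ a) (hxb : x ≠ b) :
    InArc b a x ↔ ¬ InArc a b x := by
  have e1 := sub_val_base a b x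
  have e2 := sub_val_base a b a
  simp only [sub_self, ZMod.val_zero] at e2
  have n1 := val_base_ne (a := a) hxb
  have p1 := val_base_pos (a := a) hxa
  have p2 := val_base_pos (a := a) (Ne.symm hab)
  have hm := ZMod.val_lt (x - a)
  have hm2 := ZMod.val_lt (b - a)
  unfold InArc
  rw [e1, e2]
  split_ifs <;> omega

lemma crosses_iff_of_ne {a b c d : ZMod m} (hab : a ≠ b) (hcd : c ≠ d)
    (hca : c ≠ a) (hcb : c ≠ b) (hda : d ≠ a) (hdb : d ≠ b) :
    Chord.Crosses s(a, b) s(c, d) ↔ Xor' (InArc a b c) (InArc a b d) := by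
  constructor
  · rintro ⟨a', b', c', d', he, hf, hx⟩
    have swap : ∀ u v : ZMod m, (Xor' (InArc b a u) (InArc b a v) ↔
        Xor' (InArc a b u) (InArc a b v)) ∨ ¬ (u ≠ a ∧ u ≠ b ∧ v ≠ a ∧ v ≠ b) := by
      intro u v
      by_cases h : u ≠ a ∧ u ≠ b ∧ v ≠ a ∧ v ≠ b
      · left
        obtain ⟨h1, h2, h3, h4⟩ := h
        rw [inArc_swap hab h1 h2, inArc_swap hab h3 h4]
        unfold Xor' Xor; tauto
      · right; exact h
    have hsym : ∀ u v : ZMod m, Xor' (InArc a b u) (InArc a b v) ↔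
        Xor' (InArc a b v) (InArc a b u) := by intro u v; unfold Xor' Xor; tauto
    rw [Sym2.eq_iff] at he hf
    rcases he with ⟨rfl, rfl⟩ | ⟨rfl, rfl⟩ <;>
      rcases hf with ⟨rfl, rfl⟩ | ⟨rfl, rfl⟩
    · exact hx
    · exact (hsym _ _).mp hx
    · rcases swap c d with hs | hs
      · exact hs.mp hx
      · exact absurd ⟨hca, hcb, hda, hdb⟩ hs
    · rcases swap d c with hs | hs
      · exact (hsym _ _).mp (hs.mp hx)
      · exact absurd ⟨hda, hdb, hca, hcb⟩ hs
  · intro hx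
    exact ⟨a, b, c, d, rfl, rfl, hx⟩

lemma crosses_symm_of_ne {a b c d : ZMod m} (hab : a ≠ b) (hcd : c ≠ d)
    (hca : c ≠ a) (hcb : c ≠ b) (hda : d ≠ a) (hdb : d ≠ b) :
    Chord.Crosses s(a, b) s(c, d) ↔ Chord.Crosses s(c, d) s(a, b) := by
  rw [crosses_iff_of_ne hab hcd hca hcb hda hdb,
      crosses_iff_of_ne hcd hab hca.symm hda.symm hcb.symm hdb.symm,
      xor_iff_cyc hab hcd hca hcb hda hdb,
      xor_iff_cyc hcd hab hca.symm hda.symm hcb.symm hdb.symm]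
  constructor
  · rintro (h | h)
    · exact Or.inr (cyclicOrd4_rotate h)
    · exact Or.inl (cyclicOrd4_rotate (cyclicOrd4_rotate (cyclicOrd4_rotate h)))
  · rintro (h | h)
    · exact Or.inr (cyclicOrd4_rotate h)
    · exact Or.inl (cyclicOrd4_rotate (cyclicOrd4_rotate (cyclicOrd4_rotate h)))

lemma not_crosses_self (e : Chord m) : ¬ Chord.Crosses e e := by
  rintro ⟨a, b, c, d, he, hf, hx⟩
  rw [he, Sym2.eq_iff] at hf
  have ha : ¬ InArc a b a := by unfold InArc; simp
  have hb : ¬ InArc a b b := by unfold InArc; omega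
  rcases hf with ⟨rfl, rfl⟩ | ⟨rfl, rfl⟩ <;> exact hx.elim (fun h => h.2 (by tauto))
    (fun h => h.2 (by tauto))

end Aux
set_option maxHeartbeats 2000000 in
/-- for a weak RII pair `α = {i, j}`, `β = {i+1, j+1}` (with
`i, i+1, j, j+1` distinct and in this cyclic order), `α` and `β` cross, any other chord
crosses `α` iff it crosses `β`, and deleting `α` and `β` changes `X` by `2k + 1`, where
`k` is the number of chords other than `β` crossing `α`; if `D` is evenly interlaced,
`k` is odd, so `X(D) ≡ X(D') + 3 (mod 4)`. -/
theorem weak_RII_changes_X_by_4m_sub_one (n : ℕ) (D : ChordDiagram (n + 2))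
    (D' : ChordDiagram n) (i j : ZMod (2 * (n + 2)))
    (hord : CyclicOrd4 i (i + 1) j (j + 1))
    (hα : s(i, j) ∈ D.chords) (hβ : s(i + 1, j + 1) ∈ D.chords)
    (hdel : D.DeletionOf {s(i, j), s(i + 1, j + 1)} D')
    (k : ℕ)
    (hk : k = Set.ncard {e | e ∈ D.chords ∧ e ≠ s(i + 1, j + 1) ∧ Chord.Crosses e s(i, j)}) :
    Chord.Crosses s(i, j) s(i + 1, j + 1) ∧
      (∀ e ∈ D.chords, e ≠ s(i, j) → e ≠ s(i + 1, j + 1) →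
        (Chord.Crosses e s(i, j) ↔ Chord.Crosses e s(i + 1, j + 1))) ∧
      D.X = D'.X + 2 * k + 1 ∧
      (D.EvenlyInterlaced → Odd k ∧ D.X ≡ D'.X + 3 [MOD 4]) := by
  classical
  haveI : NeZero (2 * (n + 2)) := ⟨by omega⟩
  haveI : Fact (1 < 2 * (n + 2)) := ⟨by omega⟩
  obtain ⟨ho1, ho2, ho3⟩ := hord
  have h1v : ((i + 1) - i).val = 1 := by
    rw [add_sub_cancel_left, ZMod.val_one]
  rw [h1v] at ho2
  have hJlt := ZMod.val_lt (j - i)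
  have hJ1lt := ZMod.val_lt ((j + 1) - i)
  have hJ1 : ((j + 1) - i).val = (j - i).val + 1 := by
    have heq : (j + 1) - i = (j - i) + 1 := by ring
    have hmod : ((j + 1) - i).val = ((j - i).val + 1) % (2 * (n + 2)) := by
      rw [heq, ZMod.val_add, ZMod.val_one]
    rcases Nat.lt_or_ge ((j - i).val + 1) (2 * (n + 2)) with h | h
    · rw [hmod, Nat.mod_eq_of_lt h]
    · have hem : (j - i).val + 1 = 2 * (n + 2) := by omega
      rw [hem, Nat.mod_self] at hmod
      omega
  -- pairwise distinctness of the four points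
  have hvi : (i - i).val = 0 := by rw [sub_self, ZMod.val_zero]
  have hptne : ∀ {x y : ZMod (2 * (n + 2))}, (x - i).val ≠ (y - i).val → x ≠ y :=
    fun h hxy => h (by rw [hxy])
  have d01 : i ≠ i + 1 := hptne (by rw [hvi, h1v]; omega)
  have d0J : i ≠ j := hptne (by rw [hvi]; omega)
  have d0J1 : i ≠ j + 1 := hptne (by rw [hvi, hJ1]; omega)
  have d1J : i + 1 ≠ j := hptne (by rw [h1v]; omega)
  have d1J1 : i + 1 ≠ j + 1 := hptne (by rw [h1v, hJ1]; omega)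
  have dJJ1 : j ≠ j + 1 := hptne (by rw [hJ1]; omega)
  set α : Chord (2 * (n + 2)) := s(i, j) with hαd
  set β : Chord (2 * (n + 2)) := s(i + 1, j + 1) with hβd
  have hαβ : α ≠ β := by
    rw [hαd, hβd]
    intro h
    rw [Sym2.eq_iff] at h
    rcases h with ⟨h1, _⟩ | ⟨h1, _⟩
    · exact d01 h1
    · exact d0J1 h1
  -- involution values
  have hinv : ∀ a b : ZMod (2 * (n + 2)), s(a, b) ∈ D.chords → D.inv a = b := by
    intro a b hab
    obtain ⟨x, hx⟩ := hab
    rw [Sym2.eq_iff] at hx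
    rcases hx with ⟨h1, h2⟩ | ⟨h1, h2⟩
    · rw [h1, h2]
    · rw [h1, h2]; exact D.involutive x
  have hinvi : D.inv i = j := hinv _ _ hα
  have hinvi1 : D.inv (i + 1) = j + 1 := hinv _ _ hβ
  have hinvj : D.inv j = i := by rw [← hinvi, D.involutive]
  have hinvj1 : D.inv (j + 1) = i + 1 := by rw [← hinvi1, D.involutive]
  -- endpoints of any other chord avoid the four points
  have hgen : ∀ e ∈ D.chords, e ≠ α → e ≠ β → ∃ x y : ZMod (2 * (n + 2)),
      e = s(x, y) ∧ x ≠ y ∧ x ≠ i ∧ x ≠ i + 1 ∧ x ≠ j ∧ x ≠ j + 1 ∧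
        y ≠ i ∧ y ≠ i + 1 ∧ y ≠ j ∧ y ≠ j + 1 := by
    intro e he heα heβ
    obtain ⟨x, rfl⟩ := he
    have hx0 : x ≠ i := by rintro rfl; exact heα (by rw [hαd, hinvi])
    have hx2 : x ≠ j := by rintro rfl; exact heα (by rw [hαd, hinvj, Sym2.eq_swap])
    have hx1 : x ≠ i + 1 := by rintro rfl; exact heβ (by rw [hβd, hinvi1])
    have hx3 : x ≠ j + 1 := by rintro rfl; exact heβ (by rw [hβd, hinvj1, Sym2.eq_swap])
    refine ⟨x, D.inv x, rfl, (D.fixedPointFree x).symm, hx0, hx1, hx2, hx3, ?_, ?_, ?_, ?_⟩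
    · intro h; exact hx2 (by rw [← hinvi, ← h, D.involutive x])
    · intro h; exact hx3 (by rw [← hinvi1, ← h, D.involutive x])
    · intro h; exact hx0 (by rw [← hinvj, ← h, D.involutive x])
    · intro h; exact hx1 (by rw [← hinvj1, ← h, D.involutive x])
  -- arcs at α and β agree off the four points
  have arc_iff : ∀ x : ZMod (2 * (n + 2)), x ≠ i → x ≠ i + 1 → x ≠ j → x ≠ j + 1 →
      (InArc i j x ↔ InArc (i + 1) (j + 1) x) := by
    intro x h0 h1 h2 h3
    have p0 : 0 < (x - i).val := val_base_pos h0
    have p1 : (x - i).val ≠ 1 := by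
      have := val_base_ne (a := i) h1; rwa [h1v] at this
    have p2 := val_base_ne (a := i) h2
    have p3 := val_base_ne (a := i) h3
    rw [hJ1] at p3
    have e1 := sub_val_base i (i + 1) x
    rw [h1v] at e1
    have hji : (j + 1) - (i + 1) = j - i := by ring
    unfold InArc
    rw [hji, e1]
    split_ifs <;> omega
  -- α crosses β
  have hcrossαβ : Chord.Crosses α β := by
    refine ⟨i, j, i + 1, j + 1, hαd, hβd, Or.inl ⟨⟨?_, ?_⟩, ?_⟩⟩
    · rw [h1v]; omega
    · rw [h1v]; exact ho2
    · intro hc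
      have := hc.2
      rw [hJ1] at this
      omega
  have hcrossβα : Chord.Crosses β α := by
    rw [hαd, hβd] at hcrossαβ ⊢
    exact (crosses_symm_of_ne d0J d1J1 d01.symm d1J d0J1.symm (Ne.symm dJJ1)).mp hcrossαβ
  -- symmetry helpers
  have hsymα : ∀ e ∈ D.chords, e ≠ α → (Chord.Crosses e α ↔ Chord.Crosses α e) := by
    intro e he heα
    by_cases heβ : e = β
    · rw [heβ]
      exact ⟨fun _ => hcrossαβ, fun _ => hcrossβα⟩
    · obtain ⟨x, y, rfl, hxy, hx0, hx1, hx2, hx3, hy0, hy1, hy2, hy3⟩ := hgen _ he heα heβ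
      rw [hαd]
      exact crosses_symm_of_ne hxy d0J hx0.symm hy0.symm hx2.symm hy2.symm
  have hsymβ : ∀ e ∈ D.chords, e ≠ β → (Chord.Crosses e β ↔ Chord.Crosses β e) := by
    intro e he heβ
    by_cases heα : e = α
    · rw [heα]
      exact ⟨fun _ => hcrossβα, fun _ => hcrossαβ⟩
    · obtain ⟨x, y, rfl, hxy, hx0, hx1, hx2, hx3, hy0, hy1, hy2, hy3⟩ := hgen _ he heα heβ
      rw [hβd]
      exact crosses_symm_of_ne hxy d1J1 hx1.symm hy1.symm hx3.symm hy3.symm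
  -- part 2
  have part2 : ∀ e ∈ D.chords, e ≠ α → e ≠ β →
      (Chord.Crosses e α ↔ Chord.Crosses e β) := by
    intro e he heα heβ
    obtain ⟨x, y, rfl, hxy, hx0, hx1, hx2, hx3, hy0, hy1, hy2, hy3⟩ := hgen _ he heα heβ
    rw [hαd, hβd]
    rw [crosses_symm_of_ne hxy d0J hx0.symm hy0.symm hx2.symm hy2.symm,
        crosses_symm_of_ne hxy d1J1 hx1.symm hy1.symm hx3.symm hy3.symm,
        crosses_iff_of_ne d0J hxy hx0 hx2 hy0 hy2,
        crosses_iff_of_ne d1J1 hxy hx1 hx3 hy1 hy3,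
        arc_iff x hx0 hx1 hx2 hx3, arc_iff y hy0 hy1 hy2 hy3]
  -- counting
  set K : Set (Chord (2 * (n + 2))) := {e | e ∈ D.chords ∧ e ≠ β ∧ Chord.Crosses e α}
    with hKd
  have hKα : ∀ e ∈ K, e ≠ α := by
    rintro e ⟨he, heβ, hcr⟩ rfl
    exact not_crosses_self _ hcr
  set A0 : Set (Finset (Chord (2 * (n + 2)))) :=
    {P | D.IsCrossingPair P ∧ α ∉ P ∧ β ∉ P} with hA0d
  set A1 : Set (Finset (Chord (2 * (n + 2)))) :=
    {P | D.IsCrossingPair P ∧ α ∈ P ∧ β ∉ P} with hA1d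
  set A2 : Set (Finset (Chord (2 * (n + 2)))) :=
    {P | D.IsCrossingPair P ∧ α ∉ P ∧ β ∈ P} with hA2d
  set A3 : Set (Finset (Chord (2 * (n + 2)))) :=
    {P | D.IsCrossingPair P ∧ α ∈ P ∧ β ∈ P} with hA3d
  -- A3
  have hpairαβ : D.IsCrossingPair {α, β} := by
    refine ⟨?_, ?_, ?_⟩
    · rw [Finset.card_insert_of_notMem (by simp [hαβ]), Finset.card_singleton]
    · intro e hePair
      rcases Finset.mem_insert.mp hePair with rfl | he
      · exact hα
      · rw [Finset.mem_singleton.mp he]; exact hβ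
    · intro e heP f hfP hef
      rcases Finset.mem_insert.mp heP with rfl | he <;>
        rcases Finset.mem_insert.mp hfP with rfl | hf
      · exact absurd rfl hef
      · rw [Finset.mem_singleton.mp hf]; exact hcrossαβ
      · rw [Finset.mem_singleton.mp he]; exact hcrossβα
      · exact absurd ((Finset.mem_singleton.mp he).trans
          (Finset.mem_singleton.mp hf).symm) hef
  have hA3 : A3 = {({α, β} : Finset (Chord (2 * (n + 2))))} := by
    ext P
    constructor
    · rintro ⟨⟨hc2, _, _⟩, hαP, hβP⟩
      have hsub : ({α, β} : Finset (Chord (2 * (n + 2)))) ⊆ P := by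
        intro z hz
        rcases Finset.mem_insert.mp hz with rfl | hz
        · exact hαP
        · rw [Finset.mem_singleton.mp hz]; exact hβP
      have hcards : P.card ≤ ({α, β} : Finset (Chord (2 * (n + 2)))).card := by
        rw [hc2, Finset.card_insert_of_notMem (by simp [hαβ]), Finset.card_singleton]
      exact Set.mem_singleton_iff.mpr (Finset.eq_of_subset_of_card_le hsub hcards).symm
    · intro h
      rw [Set.mem_singleton_iff] at h
      subst h
      exact ⟨hpairαβ, Finset.mem_insert_self _ _, by simp⟩
  -- A1
  have hA1img : A1 = (fun e => ({α, e} : Finset (Chord (2 * (n + 2))))) '' K := by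
    ext P
    constructor
    · rintro ⟨⟨hc2, hmem, hcr⟩, hαP, hβP⟩
      obtain ⟨a, b, hab, rfl⟩ := Finset.card_eq_two.mp hc2
      rcases Finset.mem_insert.mp hαP with rfl | hb
      · refine ⟨b, ⟨hmem b (by simp), ?_, hcr b (by simp) α (by simp) (Ne.symm hab)⟩, rfl⟩
        rintro rfl
        exact hβP (by simp)
      · have hbα : α = b := Finset.mem_singleton.mp hb
        subst hbα
        refine ⟨a, ⟨hmem a (by simp), ?_, hcr a (by simp) α (by simp) hab⟩, ?_⟩
        · rintro rfl
          exact hβP (by simp)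
        · exact Finset.pair_comm α a
    · rintro ⟨e, ⟨he, heβ, hcr⟩, rfl⟩
      have heα : e ≠ α := hKα e ⟨he, heβ, hcr⟩
      refine ⟨⟨?_, ?_, ?_⟩, by simp, ?_⟩
      · rw [Finset.card_insert_of_notMem (by simp [Ne.symm heα]), Finset.card_singleton]
      · intro z hz
        rcases Finset.mem_insert.mp hz with rfl | hz
        · exact hα
        · rw [Finset.mem_singleton.mp hz]; exact he
      · intro z hz w hw hzw
        rcases Finset.mem_insert.mp hz with rfl | hz <;>
          rcases Finset.mem_insert.mp hw with rfl | hw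
        · exact absurd rfl hzw
        · rw [Finset.mem_singleton.mp hw]
          exact (hsymα e he heα).mp hcr
        · rw [Finset.mem_singleton.mp hz]; exact hcr
        · exact absurd ((Finset.mem_singleton.mp hz).trans
            (Finset.mem_singleton.mp hw).symm) hzw
      · intro hmem'
        rcases Finset.mem_insert.mp hmem' with h | h
        · exact hαβ h.symm
        · exact heβ (Finset.mem_singleton.mp h).symm
  have hA1card : A1.ncard = k := by
    rw [hA1img, Set.ncard_image_of_injOn, hk]
    intro e₁ h₁ e₂ h₂ h
    have h' : ({α, e₁} : Finset (Chord (2 * (n + 2)))) = {α, e₂} := h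
    have : e₁ ∈ ({α, e₂} : Finset (Chord (2 * (n + 2)))) := h' ▸ (by simp)
    rcases Finset.mem_insert.mp this with h' | h'
    · exact absurd h' (hKα e₁ h₁)
    · exact Finset.mem_singleton.mp h'
  -- A2
  have hA2img : A2 = (fun e => ({β, e} : Finset (Chord (2 * (n + 2))))) '' K := by
    ext P
    constructor
    · rintro ⟨⟨hc2, hmem, hcr⟩, hαP, hβP⟩
      obtain ⟨a, b, hab, rfl⟩ := Finset.card_eq_two.mp hc2
      rcases Finset.mem_insert.mp hβP with rfl | hb
      · have hbα : b ≠ α := by rintro rfl; exact hαP (by simp)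
        have hbβ : b ≠ β := Ne.symm hab
        refine ⟨b, ⟨hmem b (by simp), hbβ, ?_⟩, rfl⟩
        exact (part2 b (hmem b (by simp)) hbα hbβ).mpr (hcr b (by simp) β (by simp) hbβ)
      · have hbβ' : β = b := Finset.mem_singleton.mp hb
        subst hbβ'
        have haα : a ≠ α := by rintro rfl; exact hαP (by simp)
        refine ⟨a, ⟨hmem a (by simp), hab, ?_⟩, Finset.pair_comm β a⟩
        exact (part2 a (hmem a (by simp)) haα hab).mpr (hcr a (by simp) β (by simp) hab)
    · rintro ⟨e, ⟨he, heβ, hcrα⟩, rfl⟩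
      have heα : e ≠ α := hKα e ⟨he, heβ, hcrα⟩
      have hcrβ : Chord.Crosses e β := (part2 e he heα heβ).mp hcrα
      refine ⟨⟨?_, ?_, ?_⟩, ?_, by simp⟩
      · rw [Finset.card_insert_of_notMem (by simp [Ne.symm heβ]), Finset.card_singleton]
      · intro z hz
        rcases Finset.mem_insert.mp hz with rfl | hz
        · exact hβ
        · rw [Finset.mem_singleton.mp hz]; exact he
      · intro z hz w hw hzw
        rcases Finset.mem_insert.mp hz with rfl | hz <;>
          rcases Finset.mem_insert.mp hw with rfl | hw
        · exact absurd rfl hzw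
        · rw [Finset.mem_singleton.mp hw]
          exact (hsymβ e he heβ).mp hcrβ
        · rw [Finset.mem_singleton.mp hz]; exact hcrβ
        · exact absurd ((Finset.mem_singleton.mp hz).trans
            (Finset.mem_singleton.mp hw).symm) hzw
      · intro hmem'
        rcases Finset.mem_insert.mp hmem' with h | h
        · exact hαβ h
        · exact heα (Finset.mem_singleton.mp h).symm
  have hA2card : A2.ncard = k := by
    rw [hA2img, Set.ncard_image_of_injOn, hk]
    intro e₁ h₁ e₂ h₂ h
    have h' : ({β, e₁} : Finset (Chord (2 * (n + 2)))) = {β, e₂} := h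
    have : e₁ ∈ ({β, e₂} : Finset (Chord (2 * (n + 2)))) := h' ▸ (by simp)
    rcases Finset.mem_insert.mp this with h' | h'
    · exact absurd h' h₁.2.1
    · exact Finset.mem_singleton.mp h'
  -- A0 via the deletion bijection
  obtain ⟨φ, hφ⟩ := hdel
  set ψ : Chord (2 * (n + 2)) → Chord (2 * n) := fun e =>
    if h : e ∈ D.chords ∧ e ∉ ({α, β} : Set (Chord (2 * (n + 2)))) then (φ ⟨e, h⟩).1
    else s(0, 0) with hψd
  have hψ : ∀ (e : Chord (2 * (n + 2)))
      (h : e ∈ D.chords ∧ e ∉ ({α, β} : Set (Chord (2 * (n + 2))))),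
      ψ e = (φ ⟨e, h⟩).1 := fun e h => dif_pos h
  have ψinj : ∀ e₁ ∈ D.chords, ∀ e₂ ∈ D.chords,
      e₁ ∉ ({α, β} : Set (Chord (2 * (n + 2)))) →
      e₂ ∉ ({α, β} : Set (Chord (2 * (n + 2)))) → ψ e₁ = ψ e₂ → e₁ = e₂ := by
    intro e₁ h₁ e₂ h₂ h₁' h₂' h
    rw [hψ e₁ ⟨h₁, h₁'⟩, hψ e₂ ⟨h₂, h₂'⟩] at h
    exact congrArg Subtype.val (φ.injective (Subtype.ext h))
  have hmemP : ∀ P ∈ A0, ∀ z ∈ P, z ∈ D.chords ∧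
      z ∉ ({α, β} : Set (Chord (2 * (n + 2)))) := by
    rintro P ⟨⟨_, hmem, _⟩, hαP, hβP⟩ z hz
    refine ⟨hmem z hz, ?_⟩
    intro hzS
    simp only [Set.mem_insert_iff, Set.mem_singleton_iff] at hzS
    rcases hzS with h | h
    · exact hαP (h ▸ hz)
    · exact hβP (h ▸ hz)
  have himg0 : (fun P : Finset (Chord (2 * (n + 2))) => P.image ψ) '' A0 =
      {P | D'.IsCrossingPair P} := by
    apply Set.Subset.antisymm
    · rintro _ ⟨P, hP, rfl⟩
      obtain ⟨⟨hc2, hmem, hcr⟩, hαP, hβP⟩ := hP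
      have hPA0 : P ∈ A0 := ⟨⟨hc2, hmem, hcr⟩, hαP, hβP⟩
      have hinjP : Set.InjOn ψ ↑P := by
        intro z hz w hw h
        obtain ⟨hz1, hz2⟩ := hmemP P hPA0 z (Finset.mem_coe.mp hz)
        obtain ⟨hw1, hw2⟩ := hmemP P hPA0 w (Finset.mem_coe.mp hw)
        exact ψinj z hz1 w hw1 hz2 hw2 h
      refine ⟨?_, ?_, ?_⟩
      · rw [Finset.card_image_of_injOn hinjP, hc2]
      · intro e' he'
        obtain ⟨z, hz, rfl⟩ := Finset.mem_image.mp he'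
        obtain ⟨hz1, hz2⟩ := hmemP P hPA0 z hz
        rw [hψ z ⟨hz1, hz2⟩]
        exact (φ ⟨z, hz1, hz2⟩).2
      · intro e' he' f' hf' hef
        obtain ⟨z, hz, rfl⟩ := Finset.mem_image.mp he'
        obtain ⟨w, hw, rfl⟩ := Finset.mem_image.mp hf'
        obtain ⟨hz1, hz2⟩ := hmemP P hPA0 z hz
        obtain ⟨hw1, hw2⟩ := hmemP P hPA0 w hw
        have hzw : z ≠ w := fun h => hef (by rw [h])
        rw [hψ z ⟨hz1, hz2⟩, hψ w ⟨hw1, hw2⟩]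
        exact (hφ ⟨z, hz1, hz2⟩ ⟨w, hw1, hw2⟩).mp (hcr z hz w hw hzw)
    · rintro P' ⟨hc2', hmem', hcr'⟩
      obtain ⟨e', f', hef', rfl⟩ := Finset.card_eq_two.mp hc2'
      have he' : e' ∈ D'.chords := hmem' e' (by simp)
      have hf' : f' ∈ D'.chords := hmem' f' (by simp)
      set x := φ.symm ⟨e', he'⟩ with hxd
      set y := φ.symm ⟨f', hf'⟩ with hyd
      have hφx : φ x = ⟨e', he'⟩ := φ.apply_symm_apply _
      have hφy : φ y = ⟨f', hf'⟩ := φ.apply_symm_apply _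
      have hψx : ψ x.1 = e' := by
        rw [hψ x.1 x.2]; exact congrArg Subtype.val hφx
      have hψy : ψ y.1 = f' := by
        rw [hψ y.1 y.2]; exact congrArg Subtype.val hφy
      have hxy : x.1 ≠ y.1 := by
        intro h
        exact hef' (by rw [← hψx, ← hψy, h])
      have hcxy : Chord.Crosses x.1 y.1 := by
        apply (hφ x y).mpr
        rw [hφx, hφy]
        exact hcr' e' (by simp) f' (by simp) hef'
      have hcyx : Chord.Crosses y.1 x.1 := by
        apply (hφ y x).mpr
        rw [hφx, hφy]
        exact hcr' f' (by simp) e' (by simp) hef'.symm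
      have hPmem : ({x.1, y.1} : Finset (Chord (2 * (n + 2)))) ∈ A0 := by
        refine ⟨⟨?_, ?_, ?_⟩, ?_, ?_⟩
        · rw [Finset.card_insert_of_notMem (by simp [hxy]), Finset.card_singleton]
        · intro z hz
          rcases Finset.mem_insert.mp hz with rfl | hz
          · exact x.2.1
          · rw [Finset.mem_singleton.mp hz]; exact y.2.1
        · intro z hz w hw hzw
          rcases Finset.mem_insert.mp hz with rfl | hz <;>
            rcases Finset.mem_insert.mp hw with rfl | hw
          · exact absurd rfl hzw
          · rw [Finset.mem_singleton.mp hw]; exact hcxy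
          · rw [Finset.mem_singleton.mp hz]; exact hcyx
          · exact absurd ((Finset.mem_singleton.mp hz).trans
              (Finset.mem_singleton.mp hw).symm) hzw
        · intro hmem''
          rcases Finset.mem_insert.mp hmem'' with h | h
          · exact x.2.2 (h ▸ Set.mem_insert _ _)
          · exact y.2.2 ((Finset.mem_singleton.mp h) ▸ Set.mem_insert _ _)
        · intro hmem''
          rcases Finset.mem_insert.mp hmem'' with h | h
          · exact x.2.2 (h ▸ Set.mem_insert_iff.mpr (Or.inr rfl))
          · exact y.2.2 ((Finset.mem_singleton.mp h) ▸
              Set.mem_insert_iff.mpr (Or.inr rfl))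
      refine ⟨{x.1, y.1}, hPmem, ?_⟩
      simp only [Finset.image_insert, Finset.image_singleton, hψx, hψy]
  have hsubkey : ∀ P ∈ A0, ∀ Q ∈ A0, P.image ψ = Q.image ψ → P ⊆ Q := by
    intro P hP Q hQ h z hz
    have hz' := hmemP P hP z hz
    have hmem1 : ψ z ∈ Q.image ψ := h ▸ Finset.mem_image_of_mem _ hz
    obtain ⟨w, hw, hwz⟩ := Finset.mem_image.mp hmem1
    have hw' := hmemP Q hQ w hw
    exact (ψinj w hw'.1 z hz'.1 hw'.2 hz'.2 hwz) ▸ hw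
  have hinj0 : Set.InjOn (fun P : Finset (Chord (2 * (n + 2))) => P.image ψ) A0 := by
    intro P hP Q hQ h
    have h' : P.image ψ = Q.image ψ := h
    exact Finset.Subset.antisymm (hsubkey P hP Q hQ h') (hsubkey Q hQ P hP h'.symm)
  have hA0card : A0.ncard = D'.X := by
    have : D'.X = Set.ncard {P | D'.IsCrossingPair P} := rfl
    rw [this, ← himg0, Set.ncard_image_of_injOn hinj0]
  -- assembling
  have hXD : D.X = A0.ncard + A1.ncard + A2.ncard + A3.ncard := by
    have hU : {P | D.IsCrossingPair P} = A0 ∪ A1 ∪ A2 ∪ A3 := by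
      ext P
      rw [hA0d, hA1d, hA2d, hA3d]
      simp only [Set.mem_union, Set.mem_setOf_eq]
      rcases Classical.em (α ∈ P) with h1 | h1 <;>
        rcases Classical.em (β ∈ P) with h2 | h2 <;> tauto
    have hd01 : Disjoint A0 A1 := by
      rw [Set.disjoint_left, hA0d, hA1d]
      rintro P ⟨_, h, _⟩ ⟨_, h', _⟩
      exact h h'
    have hd012 : Disjoint (A0 ∪ A1) A2 := by
      rw [Set.disjoint_left, hA0d, hA1d, hA2d]
      rintro P (⟨_, _, h⟩ | ⟨_, _, h⟩) ⟨_, _, h'⟩ <;> exact h h'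
    have hd0123 : Disjoint (A0 ∪ A1 ∪ A2) A3 := by
      rw [Set.disjoint_left, hA0d, hA1d, hA2d, hA3d]
      rintro P ((⟨_, h, _⟩ | ⟨_, _, h⟩) | ⟨_, h, _⟩) ⟨_, h1', h2'⟩
      · exact h h1'
      · exact h h2'
      · exact h h1'
    have : D.X = Set.ncard {P | D.IsCrossingPair P} := rfl
    rw [this, hU, Set.ncard_union_eq hd0123 (Set.toFinite _) (Set.toFinite _),
      Set.ncard_union_eq hd012 (Set.toFinite _) (Set.toFinite _),
      Set.ncard_union_eq hd01 (Set.toFinite _) (Set.toFinite _)]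
  have hX : D.X = D'.X + 2 * k + 1 := by
    rw [hXD, hA0card, hA1card, hA2card, hA3, Set.ncard_singleton]
    ring
  refine ⟨hcrossαβ, part2, hX, ?_⟩
  -- evenly interlaced
  intro hEI
  have hset : {f | f ∈ D.chords ∧ Chord.Crosses α f} = insert β K := by
    ext f
    simp only [Set.mem_setOf_eq, Set.mem_insert_iff]
    constructor
    · rintro ⟨hf, hcr⟩
      by_cases hfβ : f = β
      · exact Or.inl hfβ
      · refine Or.inr ⟨hf, hfβ, ?_⟩
        have hfα : f ≠ α := by rintro rfl; exact not_crosses_self _ hcr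
        exact (hsymα f hf hfα).mpr hcr
    · rintro (rfl | ⟨hf, hfβ, hcr⟩)
      · exact ⟨hβ, hcrossαβ⟩
      · have hfα : f ≠ α := by rintro rfl; exact not_crosses_self _ hcr
        exact ⟨hf, (hsymα f hf hfα).mp hcr⟩
  have heven := hEI α hα
  rw [hset, Set.ncard_insert_of_notMem (by rintro ⟨_, hββ, _⟩; exact hββ rfl)
    (Set.toFinite _)] at heven
  have hodd : Odd k := by
    rw [hk]
    rw [Nat.even_add_one] at heven
    exact Nat.not_even_iff_odd.mp heven
  refine ⟨hodd, ?_⟩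
  obtain ⟨t, ht⟩ := hodd
  show D.X % 4 = (D'.X + 3) % 4
  rw [hX, ht]
  omega
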